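/- arXiv:2211.09556 — 2 statements merged into one kernel-verified Lean document; each statement's English description precedes it below -/
import Mathlib

section
/- Let E ⊆ F ∩ L be subfields of ℂ. If F is linearly disjoint from L over E and E = F ∩ L, then F is G(E)-disjoint from L: for any ℓ₁, ℓ₂ ∈ L, if there exists g ∈ GL₂(F) with gℓ₁ = ℓ₂ (acting by Möbius transformations), then there exists h ∈ GL₂(E) with hℓ₁ = ℓ₂. -/
/-- `v` is linearly independent over the set of scalars `E` (as coefficients in `ℂ`). -/
def LinIndepOver (E : Set ℂ) {n : ℕ} (v : Fin n → ℂ) : Prop :=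
  ∀ c : Fin n → ℂ, (∀ i, c i ∈ E) → ∑ i, c i * v i = 0 → ∀ i, c i = 0

/-- `F` is linearly disjoint from `L` over `E`: every finite tuple from `L` that is
`E`-linearly independent is `F`-linearly independent. -/
def LinDisjoint (E : Subfield ℂ) (F L : Set ℂ) : Prop :=
  ∀ (n : ℕ) (v : Fin n → ℂ), (∀ i, v i ∈ L) → LinIndepOver (E : Set ℂ) v → LinIndepOver F v

/-- `x` and `y` are related by a Möbius transformation with coefficients in `K`. -/
def MobiusRel (K : Set ℂ) (x y : ℂ) : Prop :=
  ∃ a b c d : ℂ, a ∈ K ∧ b ∈ K ∧ c ∈ K ∧ d ∈ K ∧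
    a * d - b * c ≠ 0 ∧ c * x + d ≠ 0 ∧ (a * x + b) / (c * x + d) = y

theorem stmt_0 (E F L : Subfield ℂ) (hE : E ≤ F ⊓ L)
    (hld : LinDisjoint E (F : Set ℂ) (L : Set ℂ)) (hcap : F ⊓ L = E) :
    ∀ ℓ₁ ℓ₂ : ℂ, ℓ₁ ∈ L → ℓ₂ ∈ L →
      MobiusRel (F : Set ℂ) ℓ₁ ℓ₂ → MobiusRel (E : Set ℂ) ℓ₁ ℓ₂ := by
  rintro ℓ₁ ℓ₂ hL1 hL2 ⟨a, b, c, d, ha, hb, hc, hd, hdet, hden, heq⟩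
  simp only [SetLike.mem_coe] at ha hb hc hd
  have key : a * ℓ₁ + b = ℓ₂ * (c * ℓ₁ + d) := (div_eq_iff hden).mp heq
  by_cases h1 : ℓ₁ ∈ E
  · -- ℓ₁ ∈ E, hence ℓ₂ ∈ F ∩ L = E; translate.
    have hF1 : ℓ₁ ∈ F := (Subfield.mem_inf.mp (hE h1)).1
    have hF2 : ℓ₂ ∈ F := heq ▸ div_mem (add_mem (mul_mem ha hF1) hb)
      (add_mem (mul_mem hc hF1) hd)
    have hE2 : ℓ₂ ∈ E := by rw [← hcap]; exact Subfield.mem_inf.mpr ⟨hF2, hL2⟩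
    exact ⟨1, ℓ₂ - ℓ₁, 0, 1, one_mem _, sub_mem hE2 h1, zero_mem _, one_mem _,
      by norm_num, by norm_num, by field_simp; ring⟩
  · -- ℓ₁ ∉ E
    have h2 : ℓ₂ ∉ E := by
      intro h2
      have hF2 : ℓ₂ ∈ F := (Subfield.mem_inf.mp (hE h2)).1
      by_cases hac : a - c * ℓ₂ = 0
      · exact hdet (by linear_combination (d + c * ℓ₁) * hac - c * key)
      · have hℓ₁ : ℓ₁ = (d * ℓ₂ - b) / (a - c * ℓ₂) := by
          rw [eq_div_iff hac]; linear_combination key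
        have hF1 : ℓ₁ ∈ F := by
          rw [hℓ₁]
          exact div_mem (sub_mem (mul_mem hd hF2) hb) (sub_mem ha (mul_mem hc hF2))
        exact h1 (by rw [← hcap]; exact Subfield.mem_inf.mpr ⟨hF1, hL1⟩)
    set v : Fin 4 → ℂ := ![ℓ₁, 1, ℓ₂, ℓ₁ * ℓ₂] with hv
    have hvL : ∀ i, v i ∈ (L : Set ℂ) := by
      intro i
      fin_cases i
      exacts [hL1, one_mem L, hL2, mul_mem hL1 hL2]
    have hnotF : ¬ LinIndepOver (F : Set ℂ) v := by
      intro hF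
      have := hF ![a, b, -d, -c] (by
          intro i
          fin_cases i
          exacts [ha, hb, neg_mem hd, neg_mem hc])
        (by simp [hv, Fin.sum_univ_four]; linear_combination key)
      have hc0 : -c = 0 := this 3
      have hd0 : -d = 0 := this 2
      apply hdet
      have : c = 0 := neg_eq_zero.mp hc0
      have : d = 0 := neg_eq_zero.mp hd0
      simp [‹c = 0›, ‹d = 0›]
    have hnotE : ¬ LinIndepOver (E : Set ℂ) v := fun hE' => hnotF (hld 4 v hvL hE')
    unfold LinIndepOver at hnotE
    push_neg at hnotE
    obtain ⟨w, hwE, hwsum, i, hwi⟩ := hnotE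
    simp only [SetLike.mem_coe] at hwE
    set α := w 0; set β := w 1; set γ := w 2; set δ := w 3
    have rel : α * ℓ₁ + β + γ * ℓ₂ + δ * (ℓ₁ * ℓ₂) = 0 := by
      have := hwsum
      simp [hv, Fin.sum_univ_four] at this
      linear_combination this
    by_cases hδ : δ = 0
    · -- affine relation
      have rel3 : α * ℓ₁ + β + γ * ℓ₂ = 0 := by rw [hδ] at rel; linear_combination rel
      have hγ : γ ≠ 0 := by
        intro hγ
        have relβ : α * ℓ₁ + β = 0 := by rw [hγ] at rel3; linear_combination rel3
        by_cases hα : α = 0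
        · have hβ : β = 0 := by rw [hα] at relβ; linear_combination relβ
          fin_cases i
          exacts [hwi hα, hwi hβ, hwi hγ, hwi hδ]
        · exact h1 (by
            have : ℓ₁ = -β / α := by rw [eq_div_iff hα]; linear_combination relβ
            rw [this]
            exact div_mem (neg_mem (hwE 1)) (hwE 0))
      have hα : α ≠ 0 := by
        intro hα
        apply h2
        have : ℓ₂ = -β / γ := by
          rw [eq_div_iff hγ]; rw [hα] at rel3; linear_combination rel3
        rw [this]
        exact div_mem (neg_mem (hwE 1)) (hwE 2)
      refine ⟨-α, -β, 0, γ, neg_mem (hwE 0), neg_mem (hwE 1), zero_mem _, hwE 2,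
        ?_, by simpa using hγ, ?_⟩
      · simp only [mul_zero, sub_zero, ne_eq]
        intro h
        rcases mul_eq_zero.mp h with h | h
        · exact hα (neg_eq_zero.mp h)
        · exact hγ h
      · rw [div_eq_iff (by simpa using hγ)]
        linear_combination -rel3
    · -- genuine Möbius relation
      have hden' : δ * ℓ₁ + γ ≠ 0 := by
        intro h
        apply h1
        have : ℓ₁ = -γ / δ := by rw [eq_div_iff hδ]; linear_combination h
        rw [this]
        exact div_mem (neg_mem (hwE 2)) (hwE 3)
      refine ⟨-α, -β, δ, γ, neg_mem (hwE 0), neg_mem (hwE 1), hwE 3, hwE 2,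
        ?_, hden', ?_⟩
      · intro h
        apply h2
        have h3 : ℓ₂ * δ * (δ * ℓ₁ + γ) = -α * (δ * ℓ₁ + γ) := by
          linear_combination δ * rel - h
        have : ℓ₂ = -α / δ := by
          rw [eq_div_iff hδ]
          exact mul_right_cancel₀ hden' h3
        rw [this]
        exact div_mem (neg_mem (hwE 0)) (hwE 3)
      · rw [div_eq_iff hden']
        linear_combination -rel
end

section
/- Assume Schanuel's Conjecture. Let t ∈ ℂᵐ be a tuple with tr.deg_ℚ ℚ(t, exp(t)) = l.dim_ℚ(t) (taking dim^e(t) = 0 for simplicity), and set F = ℚ(t, exp(t)). Then for any x ∈ ℂⁿ: tr.deg_F F(x, exp(x)) ≥ l.dim_ℚ(x | t), where l.dim_ℚ(x | t) is the dimension of the span of x₁,...,xₙ in the quotient ℂ-vector space ℂ / Span_ℚ(t). -/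
set_option synthInstance.maxHeartbeats 400000
set_option maxHeartbeats 1000000

open MvPolynomial

section AuxiliaryLemmas

theorem isAlg_map {D L : Type*} [CommRing D] [Field L] [Algebra D ℂ] [Algebra L ℂ]
    (φ : D →+* L) (hφ : ∀ d, algebraMap L ℂ (φ d) = algebraMap D ℂ d)
    (hinj : Function.Injective (algebraMap D ℂ)) {z : ℂ}
    (h : IsAlgebraic D z) : IsAlgebraic L z := by
  obtain ⟨p, hp0, hpz⟩ := h
  have hφi : Function.Injective φ := fun a b hab => hinj (by rw [← hφ, hab, hφ])
  refine ⟨p.map φ, by simpa [Polynomial.map_eq_zero_iff hφi] using hp0, ?_⟩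
  rw [Polynomial.aeval_def, Polynomial.eval₂_map, ← hpz, Polynomial.aeval_def]
  congr 1
  exact RingHom.ext hφ

theorem isAlg_of_mem (K : Subfield ℂ) {z : ℂ} (h : z ∈ K) : IsAlgebraic ↥K z := by
  exact isAlgebraic_algebraMap (R := ↥K) (A := ℂ) ⟨z, h⟩

theorem isAlg_mono {K L : Subfield ℂ} (h : K ≤ L) {z : ℂ} (hz : IsAlgebraic ↥K z) :
    IsAlgebraic ↥L z :=
  isAlg_map (Subfield.inclusion h) (fun _ => rfl) (algebraMap ↥K ℂ).injective hz

theorem range_algMap (K : Subfield ℂ) : Set.range (algebraMap ↥K ℂ) = (↑K : Set ℂ) :=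
  Subtype.range_val

theorem closure_absorb (s t : Set ℂ) :
    Subfield.closure (↑(Subfield.closure s) ∪ t) = Subfield.closure (s ∪ t) := by
  rw [Subfield.closure_union, Subfield.closure_union, Subfield.closure_eq]

theorem isAlg_trans (R : Type*) [Field R] [Algebra R ℂ] (L : Subfield ℂ)
    (hRL : Set.range (algebraMap R ℂ) ⊆ ↑L)
    (halg : ∀ w ∈ L, IsAlgebraic R w) {z : ℂ} (hz : IsAlgebraic ↥L z) : IsAlgebraic R z := by
  letI : Algebra R ↥L := (RingHom.codRestrict (algebraMap R ℂ) L.toSubring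
    (fun x => hRL ⟨x, rfl⟩)).toAlgebra
  haveI : IsScalarTower R ↥L ℂ := IsScalarTower.of_algebraMap_eq fun x => rfl
  haveI : Algebra.IsAlgebraic R ↥L := ⟨fun w => by
    have : IsAlgebraic R (algebraMap ↥L ℂ w) := halg w w.2
    rwa [isAlgebraic_algebraMap_iff (algebraMap ↥L ℂ).injective] at this⟩
  haveI : Algebra.IsIntegral R ↥L := Algebra.isAlgebraic_iff_isIntegral.mp ‹_›
  exact (isIntegral_trans z (isAlgebraic_iff_isIntegral.mp hz)).isAlgebraic

theorem isAlg_closure_of_isAlg (K : Subfield ℂ) (s : Set ℂ)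
    (hs : ∀ a ∈ s, IsAlgebraic ↥K a) {w : ℂ}
    (hw : w ∈ Subfield.closure (↑K ∪ s)) : IsAlgebraic ↥K w := by
  have hs' : ∀ a ∈ s, IsIntegral ↥K a := fun a ha => (hs a ha).isIntegral
  haveI := IntermediateField.isAlgebraic_adjoin (K := ↥K) (L := ℂ) hs'
  have hw' : w ∈ IntermediateField.adjoin ↥K s := by
    show w ∈ Subfield.closure (Set.range (algebraMap ↥K ℂ) ∪ s)
    rwa [range_algMap]
  exact (IntermediateField.isAlgebraic_iff (K := ↥K)
    (x := (⟨w, hw'⟩ : IntermediateField.adjoin ↥K s))).mp (Algebra.IsAlgebraic.isAlgebraic _)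

theorem mk_of_finite {s : Set ℂ} (h : s.Finite) : Cardinal.mk ↥s = (s.ncard : Cardinal) := by
  haveI := h.fintype
  rw [Cardinal.mk_fintype, Set.ncard_eq_toFinset_card' s]
  simp [Set.toFinset_card]

theorem range_fin_append {m n : ℕ} {α : Type*} (a : Fin m → α) (b : Fin n → α) :
    Set.range (Fin.append a b) = Set.range a ∪ Set.range b := by
  ext z
  constructor
  · rintro ⟨i, rfl⟩
    refine Fin.addCases (fun j => ?_) (fun j => ?_) i
    · rw [Fin.append_left]; exact Or.inl ⟨j, rfl⟩
    · rw [Fin.append_right]; exact Or.inr ⟨j, rfl⟩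
  · rintro (⟨j, rfl⟩ | ⟨j, rfl⟩)
    · exact ⟨Fin.castAdd n j, Fin.append_left a b j⟩
    · exact ⟨Fin.natAdd m j, Fin.append_right a b j⟩

theorem ratRange_subset (K : Subfield ℂ) : Set.range (algebraMap ℚ ℂ) ⊆ ↑K := by
  rintro _ ⟨q, rfl⟩
  rw [eq_ratCast (algebraMap ℚ ℂ) q]
  exact SubfieldClass.ratCast_mem K q

end AuxiliaryLemmas
section Indep

theorem indep_frac {ι : Type*} {D : Type*} [CommRing D] [Algebra D ℂ] (f : ι → ℂ)
    (K : Subfield ℂ)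
    (hfrac : ∀ c ∈ K, ∃ a b : D, algebraMap D ℂ b ≠ 0 ∧ c = algebraMap D ℂ a / algebraMap D ℂ b)
    (hf : AlgebraicIndependent D f) : AlgebraicIndependent ↥K f := by
  classical
  rw [algebraicIndependent_iff] at hf ⊢
  intro P hPz
  by_contra hP0
  set Pc : MvPolynomial ι ℂ := MvPolynomial.map (algebraMap ↥K ℂ) P with hPc
  have hPc0 : Pc ≠ 0 := fun h => hP0 (MvPolynomial.map_injective _
    (algebraMap ↥K ℂ).injective (by simpa using h))
  have hPcz : MvPolynomial.aeval f Pc = 0 := by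
    rw [hPc, MvPolynomial.aeval_map_algebraMap]; exact hPz
  have hmem : ∀ s : ι →₀ ℕ, Pc.coeff s ∈ K := by
    intro s
    rw [hPc, MvPolynomial.coeff_map]
    exact (P.coeff s).2
  choose a b hb0 hab using fun s => hfrac (Pc.coeff s) (hmem s)
  set gD : D := ∏ s ∈ Pc.support, b s with hgD
  set g : ℂ := algebraMap D ℂ gD with hgdef
  have hg0 : g ≠ 0 := by
    rw [hgdef, hgD, map_prod]
    exact Finset.prod_ne_zero_iff.2 fun s _ => hb0 s
  set Q : MvPolynomial ι D :=
    ∑ s ∈ Pc.support, MvPolynomial.monomial s ((∏ t ∈ Pc.support.erase s, b t) * a s) with hQ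
  have hmapQ : MvPolynomial.map (algebraMap D ℂ) Q = MvPolynomial.C g * Pc := by
    rw [hQ, map_sum (MvPolynomial.map (algebraMap D ℂ))]
    simp only [MvPolynomial.map_monomial]
    conv_rhs => rw [← Pc.support_sum_monomial_coeff, Finset.mul_sum]
    refine Finset.sum_congr rfl fun s hs => ?_
    rw [MvPolynomial.C_mul_monomial]
    congr 1
    rw [map_mul, map_prod, hab s, hgdef, hgD, map_prod, ← Finset.prod_erase_mul _ _ hs,
      mul_assoc, mul_div_cancel₀ _ (hb0 s)]
  have hQz : MvPolynomial.aeval f Q = 0 := by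
    have : MvPolynomial.aeval f (MvPolynomial.map (algebraMap D ℂ) Q) = 0 := by
      rw [hmapQ, map_mul, hPcz, mul_zero]
    rwa [MvPolynomial.aeval_map_algebraMap] at this
  have hQ0 : Q = 0 := hf Q hQz
  rw [hQ0, map_zero] at hmapQ
  rcases mul_eq_zero.mp hmapQ.symm with h | h
  · exact hg0 (by simpa using h)
  · exact hPc0 h

theorem stepdown {R : Type*} [Field R] [Algebra R ℂ] (u : Set ℂ)
    (hu : AlgebraicIndependent R ((↑) : u → ℂ)) {z₀ : ℂ} (hz₀ : z₀ ∈ u) :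
    AlgebraicIndependent ↥(Algebra.adjoin R (Set.range (fun _ : Unit => z₀)))
      ((↑) : ↥(u \ {z₀}) → ℂ) := by
  classical
  have hz₀t : Transcendental R z₀ := by
    simpa using hu.transcendental (⟨z₀, hz₀⟩ : u)
  set x1 : Unit → ℂ := fun _ : Unit => z₀ with hx1def
  have hx1 : AlgebraicIndependent R x1 := by
    rw [algebraicIndependent_unique_type_iff]; exact hz₀t
  set D := Algebra.adjoin R (Set.range x1) with hD
  set g : ↥(u \ {z₀}) ⊕ Unit → ℂ := Sum.elim (fun i => (i : ℂ)) x1 with hgdef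
  have hg : AlgebraicIndependent R g := by
    have he : Function.Injective
        (Sum.elim (fun i : ↥(u \ {z₀}) => (⟨i.1, i.2.1⟩ : u))
          (fun _ : Unit => (⟨z₀, hz₀⟩ : u))) := by
      rintro (a | a) (b | b) hab
      · simpa [Subtype.ext_iff] using congrArg Subtype.val hab
      · exact absurd (congrArg Subtype.val hab) a.2.2
      · exact absurd (congrArg Subtype.val hab).symm b.2.2
      · rfl
    have := hu.comp _ he
    convert this using 1
    funext i
    cases i <;> rfl
  set χ : MvPolynomial Unit R →+* ℂ := (aeval x1).toRingHom with hχ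
  have hkey : ∀ q : MvPolynomial (↥(u \ {z₀}) ⊕ Unit) R,
      eval₂Hom χ (fun i : ↥(u \ {z₀}) => (i : ℂ)) (sumToIter R _ Unit q) = aeval g q := by
    intro q
    have : (eval₂Hom χ (fun i : ↥(u \ {z₀}) => (i : ℂ))).comp (sumToIter R _ Unit)
        = (aeval g).toRingHom := by
      apply MvPolynomial.ringHom_ext
      · intro r; simp [sumToIter_C, hχ]
      · rintro (i | i)
        · simp [sumToIter_Xl, hgdef]
        · simp [sumToIter_Xr, hχ, hgdef]
    exact congrFun (congrArg (·.toFun) this) q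
  have hinj2 : Function.Injective (eval₂Hom χ (fun i : ↥(u \ {z₀}) => (i : ℂ))) := by
    intro p q hpq
    have hsurj : Function.Surjective (sumToIter R (↥(u \ {z₀})) Unit) :=
      fun p => ⟨(sumRingEquiv R (↥(u \ {z₀})) Unit).symm p, by
        have hse : sumToIter R (↥(u \ {z₀})) Unit
            = (sumRingEquiv R (↥(u \ {z₀})) Unit : _ →+* _) := by
          apply MvPolynomial.ringHom_ext
          · intro r; simp [sumToIter_C]
          · rintro (i | i) <;> simp [sumToIter_Xl, sumToIter_Xr]
        rw [hse]; exact (sumRingEquiv R (↥(u \ {z₀})) Unit).apply_symm_apply p⟩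
    obtain ⟨p', rfl⟩ := hsurj p
    obtain ⟨q', rfl⟩ := hsurj q
    rw [hkey, hkey] at hpq
    rw [hg hpq]
  rw [AlgebraicIndependent]
  have hfactor : ∀ p : MvPolynomial (↥(u \ {z₀})) ↥D,
      aeval ((↑) : ↥(u \ {z₀}) → ℂ) p
        = eval₂Hom χ (fun i : ↥(u \ {z₀}) => (i : ℂ))
            (MvPolynomial.map (hx1.aevalEquiv.symm : ↥D →+* MvPolynomial Unit R) p) := by
    intro p
    show eval₂ (algebraMap ↥D ℂ) _ p = eval₂ χ _ (MvPolynomial.map _ p)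
    rw [eval₂_map]
    have hcomp : χ.comp (hx1.aevalEquiv.symm : ↥D →+* MvPolynomial Unit R)
        = algebraMap ↥D ℂ := by
      ext d
      show χ (hx1.aevalEquiv.symm d) = algebraMap ↥D ℂ d
      rw [hχ]
      show aeval x1 (hx1.repr d) = _
      rw [hx1.aeval_repr d]
      rfl
    rw [hcomp]
  intro p q hpq
  rw [hfactor, hfactor] at hpq
  have := hinj2 hpq
  exact (MvPolynomial.map_injective _ (RingEquiv.injective _)) this

theorem stepdown_field {R : Type*} [Field R] [Algebra R ℂ] (u : Set ℂ)
    (hu : AlgebraicIndependent R ((↑) : u → ℂ)) {z₀ : ℂ} (hz₀ : z₀ ∈ u) :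
    AlgebraicIndependent ↥(Subfield.closure (Set.range (algebraMap R ℂ) ∪ {z₀}))
      ((↑) : ↥(u \ {z₀}) → ℂ) := by
  refine indep_frac _ _ ?_ (stepdown u hu hz₀)
  intro c hc
  rw [Subfield.mem_closure_iff] at hc
  obtain ⟨y, hy, z, hz, hyz⟩ := hc
  have hsub : Subring.closure (Set.range (algebraMap R ℂ) ∪ {z₀})
      ≤ (Algebra.adjoin R (Set.range (fun _ : Unit => z₀))).toSubring := by
    rw [Subring.closure_le]
    rintro w (⟨r, rfl⟩ | hw)
    · exact Subalgebra.algebraMap_mem _ r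
    · rw [Set.mem_singleton_iff] at hw
      subst hw
      exact Algebra.subset_adjoin ⟨(), rfl⟩
  by_cases hz0 : z = 0
  · refine ⟨0, 1, by simp, ?_⟩
    rw [← hyz, hz0]
    simp
  · exact ⟨⟨y, hsub hy⟩, ⟨z, hsub hz⟩, hz0, by rw [← hyz]; rfl⟩

theorem max_isAlgebraic {R : Type*} [Field R] [Algebra R ℂ] {u v : Set ℂ}
    (hv : AlgebraicIndependent R ((↑) : v → ℂ))
    (hmax : ∀ z ∈ u, z ∉ v → ¬ AlgebraicIndependent R ((↑) : ↥(insert z v) → ℂ))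
    {z : ℂ} (hz : z ∈ u) :
    IsAlgebraic ↥(Subfield.closure (Set.range (algebraMap R ℂ) ∪ v)) z := by
  classical
  by_cases hzv : z ∈ v
  · exact isAlg_of_mem _ (Subfield.subset_closure (Set.mem_union_right _ hzv))
  by_contra htr
  have htr' : Transcendental (Algebra.adjoin R (Set.range ((↑) : v → ℂ))) z := by
    intro halg
    apply htr
    refine isAlg_map (D := ↥(Algebra.adjoin R (Set.range ((↑) : v → ℂ))))
      (RingHom.codRestrict ((Algebra.adjoin R (Set.range ((↑) : v → ℂ))).toSubring.subtype)
        (Subfield.closure (Set.range (algebraMap R ℂ) ∪ v)) ?_)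
      (fun d => rfl) Subtype.val_injective halg
    rintro ⟨d, hd⟩
    induction hd using Algebra.adjoin_induction with
    | mem w hw =>
        rcases hw with ⟨i, rfl⟩
        exact Subfield.subset_closure (Set.mem_union_right _ i.2)
    | algebraMap r => exact Subfield.subset_closure (Set.mem_union_left _ ⟨r, rfl⟩)
    | add _ _ _ _ h1 h2 => exact add_mem h1 h2
    | mul _ _ _ _ h1 h2 => exact mul_mem h1 h2
  have hopt := (hv.option_iff_transcendental z).mpr htr'
  have hins : AlgebraicIndependent R ((↑) : ↥(insert z v) → ℂ) := by
    convert hopt.comp _ (Set.subtypeInsertEquivOption hzv).injective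
    ext x
    by_cases h : ↑x = z <;> simp [h, Set.subtypeInsertEquivOption]
  exact hmax z hz hzv hins

theorem exchange_pair {R : Type*} [Field R] [Algebra R ℂ] {a b : ℂ}
    (ha : Transcendental R a)
    (hab : IsAlgebraic ↥(Subfield.closure (Set.range (algebraMap R ℂ) ∪ {b})) a) :
    IsAlgebraic ↥(Subfield.closure (Set.range (algebraMap R ℂ) ∪ {a})) b := by
  classical
  by_cases hba : b = a
  · exact isAlg_of_mem _ (Subfield.subset_closure (Set.mem_union_right _ (by simp [hba])))
  by_contra htr
  -- b is transcendental over the subalgebra adjoin R {a}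
  have htr' : Transcendental (Algebra.adjoin R (Set.range ((↑) : ({a} : Set ℂ) → ℂ))) b := by
    intro halg
    apply htr
    refine isAlg_map (D := ↥(Algebra.adjoin R (Set.range ((↑) : ({a} : Set ℂ) → ℂ))))
      (RingHom.codRestrict ((Algebra.adjoin R (Set.range ((↑) : ({a} : Set ℂ) → ℂ))).toSubring.subtype)
        (Subfield.closure (Set.range (algebraMap R ℂ) ∪ {a})) ?_)
      (fun d => rfl) Subtype.val_injective halg
    rintro ⟨d, hd⟩
    induction hd using Algebra.adjoin_induction with
    | mem w hw =>
        rcases hw with ⟨i, rfl⟩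
        exact Subfield.subset_closure (Set.mem_union_right _ i.2)
    | algebraMap r => exact Subfield.subset_closure (Set.mem_union_left _ ⟨r, rfl⟩)
    | add _ _ _ _ h1 h2 => exact add_mem h1 h2
    | mul _ _ _ _ h1 h2 => exact mul_mem h1 h2
  -- {a} is independent
  have hsingle : AlgebraicIndependent R ((↑) : ({a} : Set ℂ) → ℂ) := by
    rw [algebraicIndependent_unique_type_iff]
    exact ha
  have hopt := (hsingle.option_iff_transcendental b).mpr htr'
  have hbna : b ∉ ({a} : Set ℂ) := by simpa using hba
  have hins : AlgebraicIndependent R ((↑) : ↥(insert b ({a} : Set ℂ)) → ℂ) := by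
    convert hopt.comp _ (Set.subtypeInsertEquivOption hbna).injective
    ext x
    by_cases h : ↑x = b <;> simp [h, Set.subtypeInsertEquivOption]
  -- step down: a is transcendental over closure(R ∪ {b}), contradiction
  have hmem : b ∈ insert b ({a} : Set ℂ) := Set.mem_insert _ _
  have hsd := stepdown_field _ hins hmem
  have hset : insert b ({a} : Set ℂ) \ {b} = ({a} : Set ℂ) := by
    ext w
    simp only [Set.mem_diff, Set.mem_insert_iff, Set.mem_singleton_iff]
    constructor
    · rintro ⟨h1 | h1, h2⟩ <;> simp_all
    · rintro rfl; exact ⟨Or.inr rfl, fun h => hba h.symm⟩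
  rw [hset] at hsd
  have hamem : a ∈ ({a} : Set ℂ) := rfl
  exact hsd.transcendental (⟨a, hamem⟩ : ({a} : Set ℂ)) hab

end Indep

section Exchange

theorem card_le_of_algebraic : ∀ (k : ℕ) (R : Type) [Field R] [Algebra R ℂ] (W : Set ℂ),
    W.Finite → W.ncard ≤ k → ∀ (u : Set ℂ), AlgebraicIndependent R ((↑) : u → ℂ) →
    (∀ z ∈ u, IsAlgebraic ↥(Subfield.closure (Set.range (algebraMap R ℂ) ∪ W)) z) →
    Cardinal.mk ↥u ≤ k := by
  intro k
  induction k with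
  | zero =>
    intro R _ _ W hWf hWc u hu halg
    have hW : W = ∅ := by
      rw [← Set.ncard_eq_zero hWf]
      omega
    subst hW
    have hRalg : ∀ z ∈ u, IsAlgebraic R z := by
      intro z hz
      refine isAlg_trans R _ (fun x hx => Subfield.subset_closure (Set.mem_union_left _ hx))
        ?_ (halg z hz)
      intro w hw
      rw [Set.union_empty, ← RingHom.coe_fieldRange, Subfield.closure_eq] at hw
      obtain ⟨r, rfl⟩ := hw
      exact isAlgebraic_algebraMap r
    have hue : u = ∅ := by
      rw [Set.eq_empty_iff_forall_notMem]
      exact fun z hz => hu.transcendental (⟨z, hz⟩ : u) (hRalg z hz)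
    subst hue
    simp
  | succ k ih =>
    intro R _ _ W hWf hWc u hu halg
    rcases Set.eq_empty_or_nonempty W with rfl | ⟨w₀, hw₀⟩
    · exact (ih R ∅ Set.finite_empty (by simp) u hu halg).trans
        (Nat.cast_le.mpr (Nat.le_succ k))
    set W' := W \ {w₀} with hW'
    have hW'f : W'.Finite := hWf.sdiff
    have hW'c : W'.ncard ≤ k := by
      have := Set.ncard_diff_singleton_lt_of_mem hw₀ hWf
      rw [hW']
      omega
    by_cases hall : ∀ z ∈ u,
        IsAlgebraic ↥(Subfield.closure (Set.range (algebraMap R ℂ) ∪ W')) z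
    · exact (ih R W' hW'f hW'c u hu hall).trans (Nat.cast_le.mpr (Nat.le_succ k))
    push_neg at hall
    obtain ⟨z₀, hz₀u, hz₀t⟩ := hall
    have hWdec : W' ∪ {w₀} = W := by
      rw [hW', Set.diff_union_self]
      exact Set.union_eq_self_of_subset_right (by simpa using hw₀)
    set K := Subfield.closure (Set.range (algebraMap R ℂ) ∪ W') with hK
    set K₁ := Subfield.closure (Set.range (algebraMap R ℂ) ∪ {z₀}) with hK₁
    set B' := Subfield.closure (Set.range (algebraMap R ℂ) ∪ ({z₀} ∪ W')) with hB'
    have hEq1 : Subfield.closure (↑K ∪ {w₀})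
        = Subfield.closure (Set.range (algebraMap R ℂ) ∪ W) := by
      rw [hK, closure_absorb, Set.union_assoc, hWdec]
    have hzW : IsAlgebraic ↥(Subfield.closure (↑K ∪ {w₀})) z₀ := by
      rw [hEq1]; exact halg z₀ hz₀u
    have hw₀alg : IsAlgebraic ↥(Subfield.closure (↑K ∪ {z₀})) w₀ := by
      have := exchange_pair (R := ↥K) hz₀t (by rwa [range_algMap])
      rwa [range_algMap] at this
    have hKB' : K ≤ B' := by
      rw [hK, hB']
      exact Subfield.closure_mono (Set.union_subset_union_right _ Set.subset_union_right)
    have hw₀B' : IsAlgebraic ↥B' w₀ := by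
      refine isAlg_mono ?_ hw₀alg
      rw [Subfield.closure_le]
      rintro x (hx | hx)
      · exact hKB' hx
      · rw [Set.mem_singleton_iff] at hx
        subst hx
        exact Subfield.subset_closure (Set.mem_union_right _ (Set.mem_union_left _ rfl))
    have halg' : ∀ z ∈ u \ ({z₀} : Set ℂ),
        IsAlgebraic ↥(Subfield.closure (Set.range (algebraMap ↥K₁ ℂ) ∪ W')) z := by
      intro z hzmem
      have hz' : IsAlgebraic ↥(Subfield.closure (↑K ∪ {w₀})) z := by
        rw [hEq1]; exact halg z hzmem.1
      have h1 : IsAlgebraic ↥(Subfield.closure (↑B' ∪ {w₀})) z := by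
        refine isAlg_mono ?_ hz'
        rw [Subfield.closure_le]
        rintro x (hx | hx)
        · exact Subfield.subset_closure (Set.mem_union_left _ (hKB' hx))
        · exact Subfield.subset_closure (Set.mem_union_right _ hx)
      have h2 : ∀ w ∈ Subfield.closure (↑B' ∪ {w₀}), IsAlgebraic ↥B' w := by
        intro w hw
        refine isAlg_closure_of_isAlg B' {w₀} ?_ hw
        rintro a ha
        rw [Set.mem_singleton_iff] at ha
        subst ha
        exact hw₀B'
      have h3 : IsAlgebraic ↥B' z := by
        refine isAlg_trans ↥B' _ ?_ h2 h1
        rw [range_algMap]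
        exact fun x hx => Subfield.subset_closure (Set.mem_union_left _ hx)
      have hEq2 : Subfield.closure (Set.range (algebraMap ↥K₁ ℂ) ∪ W') = B' := by
        rw [range_algMap, hK₁, closure_absorb, Set.union_assoc]
      rw [hEq2]
      exact h3
    have hu' := stepdown_field u hu hz₀u
    have hcard := ih ↥K₁ W' hW'f hW'c (u \ {z₀}) hu' halg'
    have hdecomp : Cardinal.mk ↥(u \ ({z₀} : Set ℂ)) + Cardinal.mk ↥({z₀} : Set ℂ)
        = Cardinal.mk ↥u := Cardinal.mk_diff_add_mk (by simpa using hz₀u)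
    rw [← hdecomp, Cardinal.mk_singleton, Nat.cast_succ]
    exact add_le_add hcard le_rfl

end Exchange

open Submodule in
theorem rank_lower {m n : ℕ} (t : Fin m → ℂ) (x : Fin n → ℂ) :
    Module.rank ℚ (span ℚ (Set.range t))
      + Module.rank ℚ (span ℚ (Set.range fun i => (span ℚ (Set.range t)).mkQ (x i)))
      ≤ Module.rank ℚ (span ℚ (Set.range t ∪ Set.range x)) := by
  set pt := span ℚ (Set.range t) with hpt
  set M := span ℚ (Set.range t ∪ Set.range x) with hM
  have hle : pt ≤ M := span_mono Set.subset_union_left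
  set f : ↥M →ₗ[ℚ] ℂ ⧸ pt := pt.mkQ.comp M.subtype with hf
  have hrk := f.rank_range_add_rank_ker
  have hker : LinearMap.ker f = comap M.subtype pt := by
    rw [hf, LinearMap.ker_comp, Submodule.ker_mkQ]
  have hkerrank : Module.rank ℚ (LinearMap.ker f) = Module.rank ℚ pt := by
    rw [hker]
    exact (Submodule.comapSubtypeEquivOfLe hle).rank_eq
  have hrange : LinearMap.range f = span ℚ (Set.range fun i => pt.mkQ (x i)) := by
    rw [hf, LinearMap.range_comp, Submodule.range_subtype, hM, Submodule.map_span,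
      Set.image_union]
    have h0 : span ℚ (pt.mkQ '' Set.range t) = ⊥ := by
      rw [span_eq_bot]
      rintro _ ⟨_, ⟨i, rfl⟩, rfl⟩
      rw [Submodule.mkQ_apply, Submodule.Quotient.mk_eq_zero]
      exact subset_span ⟨i, rfl⟩
    rw [span_union, h0, bot_sup_eq]
    congr 1
    rw [← Set.range_comp]
    rfl
  rw [← hrk, hkerrank, hrange, add_comm]

/-- The transcendence degree over `ℚ` of the field `ℚ(S)`. -/
noncomputable def trdegQ (S : Set ℂ) : Cardinal :=
  ⨆ t : {t : Set ℂ // t ⊆ (IntermediateField.adjoin ℚ S : Set ℂ) ∧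
      AlgebraicIndependent ℚ ((↑) : t → ℂ)}, Cardinal.mk t.1

/-- The transcendence degree over the subfield `E` of the field `E(S)`. -/
noncomputable def trdegOver (E : Subfield ℂ) (S : Set ℂ) : Cardinal :=
  ⨆ t : {t : Set ℂ // t ⊆ (IntermediateField.adjoin (↥E) S : Set ℂ) ∧
      AlgebraicIndependent (↥E) ((↑) : t → ℂ)}, Cardinal.mk t.1

theorem stmt_12
    (SC : ∀ (n : ℕ) (x : Fin n → ℂ),
      Module.rank ℚ (Submodule.span ℚ (Set.range x)) ≤
        trdegQ (Set.range x ∪ Set.range fun i => Complex.exp (x i)))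
    (m : ℕ) (t : Fin m → ℂ)
    (hconv : trdegQ (Set.range t ∪ Set.range fun i => Complex.exp (t i)) =
      Module.rank ℚ (Submodule.span ℚ (Set.range t))) :
    ∀ (n : ℕ) (x : Fin n → ℂ),
      Module.rank ℚ (Submodule.span ℚ
          (Set.range fun i => (Submodule.span ℚ (Set.range t)).mkQ (x i))) ≤
        trdegOver (Subfield.closure (Set.range t ∪ Set.range fun i => Complex.exp (t i)))
          (Set.range x ∪ Set.range fun i => Complex.exp (x i)) := by
  intro n x
  classical
  set S : Set ℂ := Set.range t ∪ Set.range fun i => Complex.exp (t i) with hS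
  set T : Set ℂ := Set.range x ∪ Set.range fun i => Complex.exp (x i) with hT
  set F : Subfield ℂ := Subfield.closure S with hF
  have hFS : Subfield.closure (Set.range (algebraMap ℚ ℂ) ∪ S) = F :=
    le_antisymm
      (Subfield.closure_le.2 (Set.union_subset (ratRange_subset F) Subfield.subset_closure))
      (Subfield.closure_mono Set.subset_union_right)
  have hSfin : S.Finite := (Set.finite_range t).union (Set.finite_range _)
  have hTfin : T.Finite := (Set.finite_range x).union (Set.finite_range _)
  -- UPPER BOUND : trdegQ (S ∪ T) ≤ trdegQ S + trdegOver F T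
  have hUB : trdegQ (S ∪ T) ≤ trdegQ S + trdegOver F T := by
    refine ciSup_le' ?_
    rintro ⟨u, husub, huind⟩
    have husub' : u ⊆ ↑(Subfield.closure (Set.range (algebraMap ℚ ℂ) ∪ (S ∪ T))) := husub
    have hufin : u.Finite := by
      have hcr := card_le_of_algebraic ((S ∪ T).ncard) ℚ (S ∪ T) (hSfin.union hTfin) le_rfl u
        huind (fun z hz => isAlg_of_mem _ (husub' hz))
      exact Cardinal.lt_aleph0_iff_set_finite.mp
        (lt_of_le_of_lt hcr (Cardinal.nat_lt_aleph0 _))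
    -- a maximal algebraically independent (over ℚ) subset of ℚ(S)
    obtain ⟨b, -, hbmax⟩ := exists_maximal_algebraicIndependent (∅ : Set ℂ)
      (↑(Subfield.closure (Set.range (algebraMap ℚ ℂ) ∪ S))) (Set.empty_subset _)
      (algebraicIndependent_empty (K := ℚ) (A := ℂ))
    have hbind : AlgebraicIndependent ℚ ((↑) : b → ℂ) := hbmax.1.1
    have hbsub : b ⊆ ↑(Subfield.closure (Set.range (algebraMap ℚ ℂ) ∪ S)) := hbmax.1.2
    have hbfin : b.Finite := by
      have hcr := card_le_of_algebraic S.ncard ℚ S hSfin le_rfl b hbind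
        (fun z hz => isAlg_of_mem _ (hbsub hz))
      exact Cardinal.lt_aleph0_iff_set_finite.mp
        (lt_of_le_of_lt hcr (Cardinal.nat_lt_aleph0 _))
    have hbQ : Cardinal.mk ↥b ≤ trdegQ S :=
      le_ciSup (Cardinal.bddAbove_range _) (⟨b, hbsub, hbind⟩ : {p : Set ℂ //
        p ⊆ (IntermediateField.adjoin ℚ S : Set ℂ) ∧ AlgebraicIndependent ℚ ((↑) : p → ℂ)})
    have hbalg : ∀ z ∈ Subfield.closure (Set.range (algebraMap ℚ ℂ) ∪ S),
        IsAlgebraic ↥(Subfield.closure (Set.range (algebraMap ℚ ℂ) ∪ b)) z := by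
      intro z hz
      refine max_isAlgebraic
        (u := ↑(Subfield.closure (Set.range (algebraMap ℚ ℂ) ∪ S))) hbind ?_ hz
      intro w hw hwb hins
      have : insert w b ⊆ b := hbmax.2 ⟨hins, Set.insert_subset hw hbsub⟩ (Set.subset_insert _ _)
      exact hwb (this (Set.mem_insert _ _))
    -- a maximal algebraically independent (over F) subset of u
    obtain ⟨v, -, hvmax⟩ := exists_maximal_algebraicIndependent (∅ : Set ℂ) u (Set.empty_subset _)
      (algebraicIndependent_empty (K := ↥F) (A := ℂ))
    have hvind : AlgebraicIndependent ↥F ((↑) : v → ℂ) := hvmax.1.1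
    have hvsub : v ⊆ u := hvmax.1.2
    have hvfin : v.Finite := hufin.subset hvsub
    have hvT : Cardinal.mk ↥v ≤ trdegOver F T := by
      have hvadj : v ⊆ (IntermediateField.adjoin ↥F T : Set ℂ) := by
        show v ⊆ ↑(Subfield.closure (Set.range (algebraMap ↥F ℂ) ∪ T))
        rw [range_algMap]
        intro z hz
        refine Subfield.closure_mono ?_ (husub' (hvsub hz))
        rintro w (hw | (hw | hw))
        · exact Or.inl (ratRange_subset F hw)
        · exact Or.inl (Subfield.subset_closure hw)
        · exact Or.inr hw
      exact le_ciSup (Cardinal.bddAbove_range _) (⟨v, hvadj, hvind⟩ : {p : Set ℂ //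
        p ⊆ (IntermediateField.adjoin ↥F T : Set ℂ) ∧ AlgebraicIndependent ↥F ((↑) : p → ℂ)})
    -- every element of u is algebraic over F(v)
    have hstep1 : ∀ z ∈ u, IsAlgebraic ↥(Subfield.closure (↑F ∪ v)) z := by
      intro z hz
      have hmax' : ∀ w ∈ u, w ∉ v → ¬ AlgebraicIndependent ↥F ((↑) : ↥(insert w v) → ℂ) := by
        intro w hw hwv hins
        have : insert w v ⊆ v := hvmax.2 ⟨hins, Set.insert_subset hw hvsub⟩
          (Set.subset_insert _ _)
        exact hwv (this (Set.mem_insert _ _))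
      have := max_isAlgebraic (R := ↥F) (u := u) hvind hmax' hz
      rwa [range_algMap] at this
    set Bf : Subfield ℂ := Subfield.closure (Set.range (algebraMap ℚ ℂ) ∪ (b ∪ v)) with hBf
    have hBfF : Bf ≤ Subfield.closure (↑F ∪ v) := by
      rw [hBf, Subfield.closure_le]
      rintro w (hw | (hw | hw))
      · exact ratRange_subset _ hw
      · refine Subfield.subset_closure (Or.inl ?_)
        rw [← hFS]
        exact hbsub hw
      · exact Subfield.subset_closure (Or.inr hw)
    have hall : ∀ z ∈ u, IsAlgebraic ↥Bf z := by
      intro z hz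
      refine isAlg_trans ↥Bf (Subfield.closure (↑F ∪ v)) ?_ ?_ (hstep1 z hz)
      · rw [range_algMap]
        exact hBfF
      · intro w hw
        refine isAlg_closure_of_isAlg Bf (↑F ∪ v) ?_
          (Subfield.closure_mono Set.subset_union_right hw)
        rintro a (ha | ha)
        · have ha' : a ∈ Subfield.closure (Set.range (algebraMap ℚ ℂ) ∪ S) := by
            rw [hFS]; exact ha
          refine isAlg_mono ?_ (hbalg a ha')
          exact Subfield.closure_mono (Set.union_subset_union_right _ Set.subset_union_left)
        · exact isAlg_of_mem _
            (Subfield.subset_closure (Set.mem_union_right _ (Set.mem_union_right _ ha)))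
    have hcard := card_le_of_algebraic (b.ncard + v.ncard) ℚ (b ∪ v) (hbfin.union hvfin)
      (Set.ncard_union_le _ _) u huind hall
    calc Cardinal.mk ↥u ≤ ((b.ncard + v.ncard : ℕ) : Cardinal) := hcard
      _ = (b.ncard : Cardinal) + (v.ncard : Cardinal) := by push_cast; rfl
      _ = Cardinal.mk ↥b + Cardinal.mk ↥v := by rw [mk_of_finite hbfin, mk_of_finite hvfin]
      _ ≤ trdegQ S + trdegOver F T := add_le_add hbQ hvT
  -- LOWER BOUND
  have hLB : Module.rank ℚ (Submodule.span ℚ (Set.range t))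
      + Module.rank ℚ (Submodule.span ℚ
          (Set.range fun i => (Submodule.span ℚ (Set.range t)).mkQ (x i)))
      ≤ trdegQ (S ∪ T) := by
    have hsc := SC (m + n) (Fin.append t x)
    have h1 : Set.range (Fin.append t x) = Set.range t ∪ Set.range x := range_fin_append t x
    have h2 : (Set.range fun i => Complex.exp (Fin.append t x i))
        = (Set.range fun i => Complex.exp (t i)) ∪ Set.range fun i => Complex.exp (x i) := by
      have hfe : (fun i => Complex.exp (Fin.append t x i))
          = Fin.append (fun i => Complex.exp (t i)) (fun i => Complex.exp (x i)) := by
        funext i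
        refine Fin.addCases (fun j => ?_) (fun j => ?_) i
        · rw [Fin.append_left, Fin.append_left]
        · rw [Fin.append_right, Fin.append_right]
      rw [hfe, range_fin_append]
    rw [h1, h2, Set.union_union_union_comm] at hsc
    exact le_trans (rank_lower t x) hsc
  have hmain := le_trans hLB hUB
  rw [hconv] at hmain
  have hrfin : Module.rank ℚ (Submodule.span ℚ (Set.range t)) < Cardinal.aleph0 :=
    lt_of_le_of_lt (rank_span_le _)
      (lt_of_le_of_lt Cardinal.mk_range_le (by rw [Cardinal.mk_fin]; exact Cardinal.nat_lt_aleph0 m))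
  rw [add_comm (Module.rank ℚ (Submodule.span ℚ (Set.range t)))] at hmain
  rw [add_comm (Module.rank ℚ (Submodule.span ℚ (Set.range t)))
    (trdegOver F T)] at hmain
  exact (Cardinal.add_le_add_iff_of_lt_aleph0 hrfin).mp hmain
end
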